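/- Suppose in the product automaton there exists a cycle through an accepting state f that is reachable from an initial state, contains at least one S_{P,π}-vertex, and has minimal S_{P,π}-bottleneck length B* among all such cycles through accepting states. Then the prefix-suffix run formed by any path from an initial state to f followed by infinite repetition of this cycle is an accepting run achieving cost C_P equal to B*, and no accepting run has cost strictly less than B*. -/

import Mathlib

open scoped Classical

/-- Cumulative time sequence of a run. -/
def timeSeq {V : Type*} (w : V → V → ℝ) (r : ℕ → V) : ℕ → ℝ
  | 0 => 0
  | n + 1 => timeSeq w r n + w (r n) (r (n+1))

/-- Cost of an infinite run: limsup of gaps between consecutive visit times to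
`Sπ`; `⊤` if `Sπ` is visited only finitely often. -/
noncomputable def runCost {V : Type*} (w : V → V → ℝ) (Sπ : Set V) (r : ℕ → V) : EReal :=
  if {i | r i ∈ Sπ}.Infinite then
    Filter.limsup
      (fun n => ((timeSeq w r (Nat.nth (fun i => r i ∈ Sπ) (n+1))
        - timeSeq w r (Nat.nth (fun i => r i ∈ Sπ) n) : ℝ) : EReal))
      Filter.atTop
  else ⊤

/-- A run starts at an initial state and follows edges. -/
def IsRun {V : Type*} (E : V → V → Prop) (S0 : Set V) (r : ℕ → V) : Prop :=
  r 0 ∈ S0 ∧ ∀ i, E (r i) (r (i+1))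

/-- A run is accepting if it visits the accepting set infinitely often. -/
def IsAccepting {V : Type*} (F : Set V) (r : ℕ → V) : Prop :=
  ∀ N, ∃ n ≥ N, r n ∈ F

/-- The `S`-bottleneck length of a cycle, given as an infinite periodic path. -/
noncomputable def SbotLen {V : Type*} (w : V → V → ℝ) (S : Set V) (p : ℕ → V) : EReal :=
  if ∃ i, p i ∈ S then
    sSup {x : EReal | ∃ i j, i < j ∧ p i ∈ S ∧ p j ∈ S ∧
      (∀ k, i < k → k < j → p k ∉ S) ∧
      x = ((timeSeq w p j - timeSeq w p i : ℝ) : EReal)}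
  else ⊤


section Auxiliary


variable {V : Type*} {w : V → V → ℝ}

lemma timeSeq_add (w : V → V → ℝ) (r : ℕ → V) (a : ℕ) :
    ∀ b, timeSeq w r (a + b) = timeSeq w r a + ∑ e ∈ Finset.range b, w (r (a+e)) (r (a+e+1))
  | 0 => by simp
  | b+1 => by
    have h : a + (b+1) = (a + b) + 1 := by omega
    rw [h, timeSeq, timeSeq_add w r a b, Finset.sum_range_succ]
    ring

lemma nth_consecutive {p : ℕ → Prop} (hp : (setOf p).Infinite) (n : ℕ) :
    Nat.nth p n < Nat.nth p (n+1) ∧ p (Nat.nth p n) ∧ p (Nat.nth p (n+1)) ∧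
      ∀ k, Nat.nth p n < k → k < Nat.nth p (n+1) → ¬ p k := by
  refine ⟨(Nat.nth_lt_nth hp).2 n.lt_succ_self, Nat.nth_mem_of_infinite hp _,
    Nat.nth_mem_of_infinite hp _, ?_⟩
  intro k h1 h2 hk
  have h3 := Nat.nth_count hk
  have c1 : n < Nat.count p k := by
    have := (Nat.nth_lt_nth hp (k := n) (n := Nat.count p k))
    rw [h3] at this
    exact this.1 h1
  have c2 : Nat.count p k < n + 1 := by
    have := (Nat.nth_lt_nth hp (k := Nat.count p k) (n := n+1))
    rw [h3] at this
    exact this.1 h2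
  omega

lemma count_eq_of_consecutive {p : ℕ → Prop} {u v : ℕ} (hu : p u) (hv : p v)
    (huv : u < v) (hbetween : ∀ k, u < k → k < v → ¬ p k) :
    Nat.count p v = Nat.count p u + 1 := by
  have h : Nat.count p v = Nat.count p (u+1) := by
    rw [Nat.count_eq_card_filter_range, Nat.count_eq_card_filter_range]
    congr 1
    apply Finset.ext
    intro k
    simp only [Finset.mem_filter, Finset.mem_range]
    constructor
    · rintro ⟨hk, hpk⟩
      refine ⟨?_, hpk⟩
      by_contra hcon
      exact hbetween k (by omega) hk hpk
    · rintro ⟨hk, hpk⟩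
      exact ⟨by omega, hpk⟩
  rw [h, Nat.count_succ, if_pos hu]

lemma nth_of_consecutive {p : ℕ → Prop} (hp : (setOf p).Infinite) {u v : ℕ} (hu : p u) (hv : p v)
    (huv : u < v) (hbetween : ∀ k, u < k → k < v → ¬ p k) :
    Nat.nth p (Nat.count p u) = u ∧ Nat.nth p (Nat.count p u + 1) = v := by
  refine ⟨Nat.nth_count hu, ?_⟩
  rw [← count_eq_of_consecutive hu hv huv hbetween, Nat.nth_count hv]

lemma le_count_of_nth_le {p : ℕ → Prop} (hp : (setOf p).Infinite) {M u : ℕ} (hu : p u)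
    (h : Nat.nth p M ≤ u) : M ≤ Nat.count p u := by
  by_contra h'
  push_neg at h'
  have h2 : Nat.nth p (Nat.count p u) < Nat.nth p M := (Nat.nth_lt_nth hp).2 h'
  rw [Nat.nth_count hu] at h2
  omega

lemma le_count_of_inj {p : ℕ → Prop} {P k T N0 : ℕ} (hT : 0 < T)
    (hmem : ∀ t < k, p (N0 + t*T) ∧ N0 + t*T < P) : k ≤ Nat.count p P := by
  rw [Nat.count_eq_card_filter_range]
  have hinj : Function.Injective (fun t => N0 + t*T) := by
    intro t1 t2 h
    simp only at h
    have : t1 * T = t2 * T := by omega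
    exact Nat.eq_of_mul_eq_mul_right hT this
  have hsub : (Finset.range k).image (fun t => N0 + t*T) ⊆
      (Finset.range P).filter p := by
    intro x hx
    simp only [Finset.mem_image, Finset.mem_range] at hx
    obtain ⟨t, ht, rfl⟩ := hx
    simp only [Finset.mem_filter, Finset.mem_range]
    exact ⟨(hmem t ht).2, (hmem t ht).1⟩
  calc k = ((Finset.range k).image (fun t => N0 + t*T)).card := by
        rw [Finset.card_image_of_injective _ hinj, Finset.card_range]
    _ ≤ _ := Finset.card_le_card hsub


lemma timeSeq_le {V : Type*} {w : V → V → ℝ} (hw : ∀ u v, 0 < w u v) (r : ℕ → V) {a b : ℕ}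
    (h : a ≤ b) : timeSeq w r a ≤ timeSeq w r b := by
  have h1 := timeSeq_add w r a (b - a)
  rw [Nat.add_sub_cancel' h] at h1
  rw [h1]
  have h2 : 0 ≤ ∑ e ∈ Finset.range (b-a), w (r (a+e)) (r (a+e+1)) :=
    Finset.sum_nonneg fun e _ => (hw _ _).le
  linarith

lemma runCost_nonneg {V : Type*} {w : V → V → ℝ} (hw : ∀ u v, 0 < w u v) (Sπ : Set V)
    (r : ℕ → V) : (0 : EReal) ≤ runCost w Sπ r := by
  rw [runCost]
  split_ifs with h
  · apply Filter.le_limsup_of_frequently_le ?_ (by isBoundedDefault)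
    apply Filter.Eventually.frequently
    apply Filter.Eventually.of_forall
    intro n
    have h1 : Nat.nth (fun i => r i ∈ Sπ) n ≤ Nat.nth (fun i => r i ∈ Sπ) (n+1) :=
      (Nat.nth_le_nth h).2 (by omega)
    have h2 := timeSeq_le hw r h1
    exact EReal.coe_nonneg.2 (by linarith)
  · exact le_top

lemma mod_succ_cases {T n : ℕ} (hT : 0 < T) :
    ((n % T) + 1 = T ∧ (n+1) % T = 0) ∨ ((n % T) + 1 < T ∧ (n+1) % T = n % T + 1) := by
  have hm : n % T < T := Nat.mod_lt _ hT
  have hqm : T * (n / T) + n % T = n := Nat.div_add_mod n T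
  by_cases h : n % T + 1 = T
  · left
    refine ⟨h, ?_⟩
    have hmul : T * (n / T + 1) = T * (n / T) + T := by ring
    have : n + 1 = T * (n / T + 1) := by omega
    rw [this, Nat.mul_mod_right]
  · right
    refine ⟨by omega, ?_⟩
    have h2 : n + 1 = (n % T + 1) + T * (n / T) := by omega
    rw [h2, Nat.add_mul_mod_self_left, Nat.mod_eq_of_lt (by omega)]


lemma runCost_eventually_periodic {V : Type*} (w : V → V → ℝ)
    (Sπ : Set V) (ρ c : ℕ → V) (N T : ℕ) (hT : 0 < T)
    (hρN : ∀ t, ρ (N + t) = c t) (hcper : ∀ i, c (i + T) = c i)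
    (hex : ∃ i, c i ∈ Sπ) :
    runCost w Sπ ρ = SbotLen w Sπ c := by
  obtain ⟨i0, hi0⟩ := hex
  -- multiple periodicity
  have hcm : ∀ m k, c (m + k * T) = c m := by
    intro m k
    induction k with
    | zero => simp
    | succ k ih =>
      have h : m + (k+1) * T = (m + k * T) + T := by ring
      rw [h, hcper, ih]
  have hρge : ∀ u, N ≤ u → ρ u = c (u - N) := by
    intro u hu
    have := hρN (u - N)
    rwa [Nat.add_sub_cancel' hu] at this
  set p : ℕ → Prop := fun i => ρ i ∈ Sπ with hp
  have hinf : (setOf p).Infinite := by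
    apply Set.infinite_of_forall_exists_gt
    intro a
    refine ⟨N + (i0 + (a+1)*T), ?_, ?_⟩
    · show ρ (N + (i0 + (a+1)*T)) ∈ Sπ
      rw [hρN, hcm]
      exact hi0
    · have : a + 1 ≤ (a+1) * T := Nat.le_mul_of_pos_right _ hT
      omega
  -- time shift
  have hshift : ∀ t, timeSeq w ρ (N + t) = timeSeq w ρ N + timeSeq w c t := by
    intro t
    induction t with
    | zero => simp [timeSeq]
    | succ t ih =>
      have h : N + (t+1) = (N + t) + 1 := by omega
      rw [h, timeSeq, ih, timeSeq, hρN t]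
      have h2 : ρ (N + t + 1) = c (t + 1) := by
        have := hρN (t+1); rwa [← Nat.add_assoc] at this
      rw [h2]
      ring
  -- periodic time shift
  have htp1 : ∀ i b, timeSeq w c ((i + T) + b) - timeSeq w c (i + T)
      = timeSeq w c (i + b) - timeSeq w c i := by
    intro i b
    rw [timeSeq_add w c (i+T) b, timeSeq_add w c i b]
    have hAB : ∑ e ∈ Finset.range b, w (c (i+T+e)) (c (i+T+e+1))
        = ∑ e ∈ Finset.range b, w (c (i+e)) (c (i+e+1)) := by
      apply Finset.sum_congr rfl
      intro e _
      have h1 : i + T + e = (i + e) + T := by omega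
      have h2 : i + T + e + 1 = (i + e + 1) + T := by omega
      rw [h2, h1, hcper, hcper]
    rw [hAB]
    ring
  have htpk : ∀ k i b, timeSeq w c ((i + k * T) + b) - timeSeq w c (i + k * T)
      = timeSeq w c (i + b) - timeSeq w c i := by
    intro k
    induction k with
    | zero => intro i b; simp
    | succ k ih =>
      intro i b
      have h : i + (k+1) * T = (i + k * T) + T := by ring
      rw [h, htp1 (i + k * T) b, ih]
  have hSbot : SbotLen w Sπ c = sSup {x : EReal | ∃ i j, i < j ∧ c i ∈ Sπ ∧ c j ∈ Sπ ∧
      (∀ k, i < k → k < j → c k ∉ Sπ) ∧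
      x = ((timeSeq w c j - timeSeq w c i : ℝ) : EReal)} := by
    rw [SbotLen, if_pos ⟨i0, hi0⟩]
  have hCost : runCost w Sπ ρ = Filter.limsup
      (fun n => ((timeSeq w ρ (Nat.nth p (n+1)) - timeSeq w ρ (Nat.nth p n) : ℝ) : EReal))
      Filter.atTop := by
    rw [runCost, if_pos (show {i | ρ i ∈ Sπ}.Infinite from hinf)]
  rw [hCost, hSbot]
  apply le_antisymm
  · -- limsup ≤ sSup
    apply Filter.limsup_le_of_le (by isBoundedDefault)
    rw [Filter.eventually_atTop]
    refine ⟨N, fun n hn => ?_⟩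
    obtain ⟨hlt, hpu, hpv, hbet⟩ := nth_consecutive hinf n
    set u := Nat.nth p n with hu
    set v := Nat.nth p (n+1) with hv
    have huN : N ≤ u := by
      have h1 : n ≤ u := Nat.le_nth (fun hf => absurd hf hinf)
      omega
    have hvN : N ≤ v := le_trans huN hlt.le
    apply le_sSup
    refine ⟨u - N, v - N, by omega, ?_, ?_, ?_, ?_⟩
    · rw [← hρge u huN]; exact hpu
    · rw [← hρge v hvN]; exact hpv
    · intro k hk1 hk2
      have h1 : ρ (N + k) = c k := hρN k
      rw [← h1]
      exact hbet (N + k) (by omega) (by omega)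
    · congr 1
      have e1 : timeSeq w ρ v = timeSeq w ρ N + timeSeq w c (v - N) := by
        conv_lhs => rw [← Nat.add_sub_cancel' hvN]
        exact hshift _
      have e2 : timeSeq w ρ u = timeSeq w ρ N + timeSeq w c (u - N) := by
        conv_lhs => rw [← Nat.add_sub_cancel' huN]
        exact hshift _
      rw [e1, e2]
      ring
  · -- sSup ≤ limsup
    apply sSup_le
    rintro x ⟨i, j, hij, hci, hcj, hbet, rfl⟩
    apply Filter.le_limsup_of_frequently_le ?_ (by isBoundedDefault)
    rw [Filter.frequently_atTop]
    intro K
    set P := N + (i + K * T) with hP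
    set Q := N + (j + K * T) with hQ
    have hpP : p P := by
      show ρ P ∈ Sπ
      rw [hP, hρN, hcm]
      exact hci
    have hpQ : p Q := by
      show ρ Q ∈ Sπ
      rw [hQ, hρN, hcm]
      exact hcj
    have hPQ : P < Q := by omega
    have hbet' : ∀ m, P < m → m < Q → ¬ p m := by
      intro m hm1 hm2 hpm
      have hmN : N ≤ m := by omega
      have h1 : ρ m = c (m - N) := hρge m hmN
      have h2 : m - N = (m - N - K * T) + K * T := by omega
      have h3 : c (m - N) = c (m - N - K * T) := by
        conv_lhs => rw [h2]
        rw [hcm]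
      refine hbet (m - N - K * T) (by omega) (by omega) ?_
      rw [← h3, ← h1]
      exact hpm
    obtain ⟨h1, h2⟩ := nth_of_consecutive hinf hpP hpQ hPQ hbet'
    refine ⟨Nat.count p P, ?_, ?_⟩
    · apply le_count_of_inj (N0 := N + i) hT
      intro t ht
      constructor
      · show ρ (N + i + t * T) ∈ Sπ
        have h3 : N + i + t * T = N + (i + t * T) := by omega
        rw [h3, hρN, hcm]
        exact hci
      · have : t * T < K * T := (Nat.mul_lt_mul_right hT).2 ht
        omega
    · rw [h1, h2]
      apply le_of_eq
      congr 1
      have e1 : timeSeq w ρ Q = timeSeq w ρ N + timeSeq w c (j + K * T) := by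
        rw [hQ]; exact hshift _
      have e2 : timeSeq w ρ P = timeSeq w ρ N + timeSeq w c (i + K * T) := by
        rw [hP]; exact hshift _
      have e3 := htpk K i (j - i)
      rw [show i + K * T + (j - i) = j + K * T from by omega,
        show i + (j - i) = j from by omega] at e3
      rw [e1, e2]
      linarith [e3]

lemma exists_cycle_of_run {V : Type*} [Fintype V] (E : V → V → Prop) (w : V → V → ℝ)
    (S0 FP Sπ : Set V) (r' : ℕ → V)
    (hrun' : IsRun E S0 r') (hacc' : IsAccepting FP r') (x : ℝ)
    (hx : runCost w Sπ r' < (x : ℝ)) :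
    ∃ (c'' : ℕ → V) (T' : ℕ), 0 < T' ∧ (∀ i, E (c'' i) (c'' (i+1))) ∧
      (∀ i, c'' (i + T') = c'' i) ∧ c'' 0 ∈ FP ∧ (∃ i < T', c'' i ∈ Sπ) ∧
      (∃ (pre' : ℕ → V) (N' : ℕ), pre' 0 ∈ S0 ∧ (∀ i < N', E (pre' i) (pre' (i+1))) ∧
        pre' N' = c'' 0) ∧
      SbotLen w Sπ c'' ≤ (x : EReal) := by
  set p : ℕ → Prop := fun i => r' i ∈ Sπ with hp
  have hSinf : {i | r' i ∈ Sπ}.Infinite := by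
    by_contra h
    rw [runCost, if_neg h] at hx
    exact (not_top_lt) hx
  have hCost : runCost w Sπ r' = Filter.limsup
      (fun n => ((timeSeq w r' (Nat.nth p (n+1)) - timeSeq w r' (Nat.nth p n) : ℝ) : EReal))
      Filter.atTop := by
    rw [runCost, if_pos hSinf]
  rw [hCost] at hx
  have hev := Filter.eventually_lt_of_limsup_lt hx (by isBoundedDefault)
  rw [Filter.eventually_atTop] at hev
  obtain ⟨M, hM⟩ := hev
  -- pigeonhole for a recurring Sπ vertex
  have hpige : ∃ y : V, {i | p i ∧ r' i = y}.Infinite := by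
    by_contra h
    push_neg at h
    apply hSinf
    have hsub : {i | r' i ∈ Sπ} ⊆ ⋃ y ∈ (Set.univ : Set V), {i | p i ∧ r' i = y} := by
      intro i hi
      exact Set.mem_biUnion (Set.mem_univ (r' i)) ⟨hi, rfl⟩
    exact Set.Finite.subset (Set.Finite.biUnion Set.finite_univ (fun y _ => h y)) hsub
  obtain ⟨y, hyinf⟩ := hpige
  obtain ⟨a, ha, haM⟩ := hyinf.exists_gt (Nat.nth p M)
  obtain ⟨k, hk, hkFP⟩ := hacc' (a+1)
  obtain ⟨b, hb, hbk⟩ := hyinf.exists_gt k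
  have hak : a < k := by omega
  have hkb : k < b := hbk
  set T' := b - a with hT'def
  set s := k - a with hsdef
  have hT' : 0 < T' := by omega
  have hs : 0 < s := by omega
  have hsT : s < T' := by omega
  have hab : r' a = r' b := ha.2.trans hb.2.symm
  set φ : ℕ → ℕ := fun i => a + ((i + s) % T') with hφ
  set c'' : ℕ → V := fun i => r' (φ i) with hc''
  have hφlt : ∀ i, (i + s) % T' < T' := fun i => Nat.mod_lt _ hT'
  have hstep : ∀ i, (φ (i+1) = φ i + 1) ∨ (φ i = a + (T' - 1) ∧ φ (i+1) = a) := by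
    intro i
    have h1 : i + 1 + s = (i + s) + 1 := by omega
    rcases mod_succ_cases (n := i + s) hT' with ⟨hA, hB⟩ | ⟨hA, hB⟩
    · right
      constructor
      · show a + ((i + s) % T') = a + (T' - 1)
        omega
      · show a + ((i + 1 + s) % T') = a
        rw [h1, hB]
        omega
    · left
      show a + ((i + 1 + s) % T') = a + ((i + s) % T') + 1
      rw [h1, hB]
      omega
  have hval : ∀ i, r' (φ (i+1)) = r' (φ i + 1) := by
    intro i
    rcases hstep i with h | ⟨h1, h2⟩
    · rw [h]
    · rw [h2, h1]
      have hb1 : a + (T' - 1) + 1 = b := by omega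
      rw [hb1, hab]
  refine ⟨c'', T', hT', ?_, ?_, ?_, ?_, ?_, ?_⟩
  · -- edges
    intro i
    show E (r' (φ i)) (r' (φ (i+1)))
    rw [hval i]
    exact hrun'.2 (φ i)
  · -- periodicity
    intro i
    show r' (φ (i + T')) = r' (φ i)
    have : φ (i + T') = φ i := by
      show a + ((i + T' + s) % T') = a + ((i + s) % T')
      have h1 : i + T' + s = (i + s) + T' := by omega
      rw [h1, Nat.add_mod_right]
    rw [this]
  · -- c'' 0 ∈ FP
    show r' (φ 0) ∈ FP
    have : φ 0 = k := by
      show a + ((0 + s) % T') = k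
      rw [Nat.zero_add, Nat.mod_eq_of_lt hsT]
      omega
    rw [this]
    exact hkFP
  · -- Sπ vertex
    refine ⟨T' - s, by omega, ?_⟩
    show r' (φ (T' - s)) ∈ Sπ
    have : φ (T' - s) = a := by
      show a + ((T' - s + s) % T') = a
      rw [show T' - s + s = T' from by omega, Nat.mod_self]
      omega
    rw [this]
    exact ha.1
  · -- prefix
    refine ⟨r', k, hrun'.1, fun i _ => hrun'.2 i, ?_⟩
    show r' k = r' (φ 0)
    have : φ 0 = k := by
      show a + ((0 + s) % T') = k
      rw [Nat.zero_add, Nat.mod_eq_of_lt hsT]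
      omega
    rw [this]
  · -- SbotLen bound
    have hexS : ∃ i, c'' i ∈ Sπ := by
      refine ⟨T' - s, ?_⟩
      show r' (φ (T' - s)) ∈ Sπ
      have : φ (T' - s) = a := by
        show a + ((T' - s + s) % T') = a
        rw [show T' - s + s = T' from by omega, Nat.mod_self]
        omega
      rw [this]
      exact ha.1
    rw [SbotLen, if_pos hexS]
    apply sSup_le
    rintro x' ⟨i, j, hij, hSi, hSj, hbet, rfl⟩
    obtain ⟨d, hd⟩ : ∃ d, j = i + (d + 1) := ⟨j - i - 1, by omega⟩
    set u := φ i with hu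
    -- chain lemma
    have hchain : ∀ e, e ≤ d → φ (i + e) = u + e := by
      intro e he
      induction e with
      | zero => simp [hu]
      | succ e ih =>
        have ihe := ih (by omega)
        rcases hstep (i + e) with h | ⟨h1, h2⟩
        · rw [show i + (e+1) = (i + e) + 1 from by omega, h, ihe]
          omega
        · exfalso
          have hin : c'' (i + e + 1) ∈ Sπ := by
            show r' (φ (i + e + 1)) ∈ Sπ
            rw [show i + e + 1 = (i+e) + 1 from rfl, h2]
            exact ha.1
          exact hbet (i + e + 1) (by omega) (by omega) hin
    -- endpoint value
    have hend : ∀ e, e ≤ d → r' (φ (i + e + 1)) = r' (u + e + 1) := by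
      intro e he
      have h1 : r' (φ ((i + e) + 1)) = r' (φ (i + e) + 1) := hval (i + e)
      rw [h1, hchain e he]
    -- value equality
    have hvaleq : timeSeq w c'' j - timeSeq w c'' i
        = timeSeq w r' (u + (d + 1)) - timeSeq w r' u := by
      rw [hd, timeSeq_add w c'' i (d+1), timeSeq_add w r' u (d+1)]
      have hsum : ∑ e ∈ Finset.range (d+1), w (c'' (i+e)) (c'' (i+e+1))
          = ∑ e ∈ Finset.range (d+1), w (r' (u+e)) (r' (u+e+1)) := by
        apply Finset.sum_congr rfl
        intro e he
        rw [Finset.mem_range] at he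
        have he' : e ≤ d := by omega
        show w (r' (φ (i+e))) (r' (φ (i+e+1))) = w (r' (u+e)) (r' (u+e+1))
        rw [hchain e he', hend e he']
      rw [hsum]
      ring
    -- Sπ at endpoints of r'
    have hru : r' u ∈ Sπ := hSi
    have hrv : r' (u + (d+1)) ∈ Sπ := by
      have := hend d le_rfl
      rw [show i + d + 1 = i + (d+1) from by omega, ← hd] at this
      rw [show u + (d+1) = u + d + 1 from by omega, ← this]
      exact hSj
    -- consecutive in r'
    have hbet' : ∀ m, u < m → m < u + (d+1) → ¬ p m := by
      intro m hm1 hm2 hpm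
      set e := m - u with he
      have he1 : 1 ≤ e := by omega
      have he2 : e ≤ d := by omega
      have : c'' (i + e) ∈ Sπ := by
        show r' (φ (i + e)) ∈ Sπ
        rw [hchain e he2, show u + e = m from by omega]
        exact hpm
      exact hbet (i + e) (by omega) (by omega) this
    have hpu : p u := hru
    have hpv : p (u + (d+1)) := hrv
    obtain ⟨h1, h2⟩ := nth_of_consecutive hSinf hpu hpv (by omega) hbet'
    have hMn : M ≤ Nat.count p u := by
      apply le_count_of_nth_le hSinf hpu
      show Nat.nth p M ≤ u
      have hau : a ≤ u := Nat.le_add_right _ _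
      omega
    have := hM (Nat.count p u) hMn
    rw [h1, h2] at this
    rw [hvaleq]
    exact le_of_lt this

end Auxiliary

/-- Suppose the product automaton has a cycle `c` (period `T`)
through an accepting state `f = c 0`, reachable from an initial state by a
finite path `pre` of length `N`, containing an `S_{P,π}`-vertex, and of minimal
`S_{P,π}`-bottleneck length `B* = SbotLen c` among all such cycles.  Then the
prefix-suffix run obtained by following `pre` and then repeating `c` forever is
an accepting run of cost exactly `B*`, and no accepting run has cost less
than `B*`. -/
theorem optimal_cycle_gives_optimal_run
    {V : Type*} [Fintype V]
    (E : V → V → Prop) (w : V → V → ℝ) (hw : ∀ u v, 0 < w u v)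
    (S0 FP Sπ : Set V)
    (c : ℕ → V) (T : ℕ) (hT : 0 < T)
    (hcedges : ∀ i, E (c i) (c (i+1)))
    (hcper : ∀ i, c (i + T) = c i)
    (hcf : c 0 ∈ FP)
    (hcS : ∃ i < T, c i ∈ Sπ)
    (pre : ℕ → V) (N : ℕ)
    (hpre0 : pre 0 ∈ S0)
    (hpreedges : ∀ i < N, E (pre i) (pre (i+1)))
    (hpreN : pre N = c 0)
    (hmin : ∀ (c' : ℕ → V) (T' : ℕ), 0 < T' → (∀ i, E (c' i) (c' (i+1))) →
      (∀ i, c' (i + T') = c' i) → c' 0 ∈ FP → (∃ i < T', c' i ∈ Sπ) →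
      (∃ (pre' : ℕ → V) (N' : ℕ), pre' 0 ∈ S0 ∧ (∀ i < N', E (pre' i) (pre' (i+1))) ∧
        pre' N' = c' 0) →
      SbotLen w Sπ c ≤ SbotLen w Sπ c') :
    IsRun E S0 (fun i => if i < N then pre i else c (i - N)) ∧
    IsAccepting FP (fun i => if i < N then pre i else c (i - N)) ∧
    runCost w Sπ (fun i => if i < N then pre i else c (i - N)) = SbotLen w Sπ c ∧
    ∀ r' : ℕ → V, IsRun E S0 r' → IsAccepting FP r' →
      SbotLen w Sπ c ≤ runCost w Sπ r' := by
  obtain ⟨i0, hi0T, hi0⟩ := hcS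
  have hcm : ∀ m k, c (m + k * T) = c m := by
    intro m k
    induction k with
    | zero => simp
    | succ k ih =>
      have h : m + (k+1) * T = (m + k * T) + T := by ring
      rw [h, hcper, ih]
  set ρ : ℕ → V := fun i => if i < N then pre i else c (i - N) with hρdef
  have hρval : ∀ t, ρ (N + t) = c t := by
    intro t
    rw [hρdef]
    simp only
    rw [if_neg (by omega), Nat.add_sub_cancel_left]
  refine ⟨⟨?_, ?_⟩, ?_, ?_, ?_⟩
  · -- initial state
    rw [hρdef]
    simp only
    split_ifs with h
    · exact hpre0
    · have hN0 : N = 0 := by omega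
      rw [Nat.zero_sub, ← hpreN, hN0]
      exact hpre0
  · -- edges
    intro i
    rw [hρdef]
    simp only
    by_cases h1 : i + 1 < N
    · rw [if_pos (by omega : i < N), if_pos h1]
      exact hpreedges i (by omega)
    · by_cases h2 : i < N
      · rw [if_pos h2, if_neg h1]
        have hiN : i + 1 = N := by omega
        have h3 : c (i + 1 - N) = pre (i+1) := by
          rw [hiN, Nat.sub_self, ← hpreN]
        rw [h3]
        exact hpreedges i h2
      · rw [if_neg h2, if_neg h1]
        rw [show i + 1 - N = (i - N) + 1 from by omega]
        exact hcedges (i - N)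
  · -- accepting
    intro N0
    refine ⟨N + N0 * T, ?_, ?_⟩
    · have : N0 ≤ N0 * T := Nat.le_mul_of_pos_right _ hT
      omega
    · rw [hρval (N0 * T)]
      have : c (N0 * T) = c 0 := by
        have := hcm 0 N0
        rwa [Nat.zero_add] at this
      rw [this]
      exact hcf
  · -- cost of the prefix-suffix run
    exact runCost_eventually_periodic w Sπ ρ c N T hT hρval hcper ⟨i0, hi0⟩
  · -- optimality
    intro r' hrun' hacc'
    by_cases htop : runCost w Sπ r' = ⊤
    · rw [htop]
      exact le_top
    have hge0 : (0 : EReal) ≤ runCost w Sπ r' := runCost_nonneg hw Sπ r'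
    have hbot : runCost w Sπ r' ≠ ⊥ := fun h => by rw [h] at hge0; exact absurd hge0 (by simp)
    set l : ℝ := (runCost w Sπ r').toReal with hldef
    have hl : (l : EReal) = runCost w Sπ r' := EReal.coe_toReal htop hbot
    have key : ∀ ε : ℝ, 0 < ε → SbotLen w Sπ c ≤ ((l + ε : ℝ) : EReal) := by
      intro ε hε
      have hx : runCost w Sπ r' < ((l + ε : ℝ) : EReal) := by
        rw [← hl]
        exact_mod_cast EReal.coe_lt_coe_iff.2 (by linarith)
      obtain ⟨c'', T', h1, h2, h3, h4, h5, h6, h7⟩ :=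
        exists_cycle_of_run E w S0 FP Sπ r' hrun' hacc' (l + ε) hx
      exact (hmin c'' T' h1 h2 h3 h4 h5 h6).trans h7
    rw [← hl]
    by_cases hBbot : SbotLen w Sπ c = ⊥
    · rw [hBbot]
      exact bot_le
    have hBtop : SbotLen w Sπ c ≠ ⊤ := by
      intro h
      have h1 := key 1 one_pos
      rw [h] at h1
      exact absurd h1 (not_le.2 (EReal.coe_lt_top _))
    rw [← EReal.coe_toReal hBtop hBbot]
    apply EReal.coe_le_coe_iff.2
    by_contra hcon
    push_neg at hcon
    have h1 := key (((SbotLen w Sπ c).toReal - l)/2) (by linarith)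
    rw [← EReal.coe_toReal hBtop hBbot] at h1
    have h2 := EReal.coe_le_coe_iff.1 h1
    rw [EReal.toReal_coe] at h2
    linarith
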